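/- (Auxiliary tensor supermodularity) Let a_r, b_r ∈ ℝ^{d_r}_{≥0} for r = 1,…,n satisfy a_{rk} b_{rl} ≥ a_{rl} b_{rk} for all k ≤ l. Define the 2×d_1×…×d_n tensor Q by q_{1 i_1…i_n} = a_{1i_1}···a_{ni_n} and q_{2 i_1…i_n} = b_{1i_1}···b_{ni_n}. Then Q is e-supermodular: for all indices (i_0,i), (j_0,j), with k = componentwise min and l = componentwise max, q_{i_0 i} q_{j_0 j} ≤ q_{k_0 k} q_{l_0 l}. -/
import Mathlib


open Finset

/-- the auxiliary 2×d_1×…×d_n tensor Q, with slices the two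
rank-one summands, is e-supermodular. -/
theorem stmt_13 {n : ℕ} (d : Fin n → ℕ)
    (a b : ∀ r, Fin (d r) → ℝ)
    (ha : ∀ r k, 0 ≤ a r k) (hb : ∀ r k, 0 ≤ b r k)
    (hminor : ∀ r (k l : Fin (d r)), k ≤ l → a r l * b r k ≤ a r k * b r l)
    (Q : Fin 2 → (∀ r, Fin (d r)) → ℝ)
    (hQ1 : ∀ i, Q 0 i = ∏ r, a r (i r))
    (hQ2 : ∀ i, Q 1 i = ∏ r, b r (i r)) :
    ∀ (i0 j0 : Fin 2) (i j : ∀ r, Fin (d r)),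
      Q i0 i * Q j0 j ≤
        Q (min i0 j0) (fun r => min (i r) (j r)) *
        Q (max i0 j0) (fun r => max (i r) (j r)) := by
  have h2 : ∀ x : Fin 2, x = 0 ∨ x = 1 := by decide
  intro i0 j0 i j
  rcases h2 i0 with rfl | rfl <;> rcases h2 j0 with rfl | rfl
  · rw [show min (0:Fin 2) 0 = 0 from rfl, show max (0:Fin 2) 0 = 0 from rfl,
      hQ1, hQ1, hQ1, hQ1, ← Finset.prod_mul_distrib, ← Finset.prod_mul_distrib]
    apply le_of_eq
    apply Finset.prod_congr rfl
    intro r _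
    rcases le_total (i r) (j r) with h | h
    · rw [min_eq_left h, max_eq_right h]
    · rw [min_eq_right h, max_eq_left h, mul_comm]
  · rw [show min (0:Fin 2) 1 = 0 from rfl, show max (0:Fin 2) 1 = 1 from rfl,
      hQ1, hQ2, hQ1, hQ2, ← Finset.prod_mul_distrib, ← Finset.prod_mul_distrib]
    apply Finset.prod_le_prod
    · exact fun r _ => mul_nonneg (ha r _) (hb r _)
    · intro r _
      rcases le_total (i r) (j r) with h | h
      · rw [min_eq_left h, max_eq_right h]
      · rw [min_eq_right h, max_eq_left h]
        exact hminor r _ _ h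
  · rw [show min (1:Fin 2) 0 = 0 from rfl, show max (1:Fin 2) 0 = 1 from rfl,
      hQ2, hQ1, hQ1, hQ2, ← Finset.prod_mul_distrib, ← Finset.prod_mul_distrib]
    apply Finset.prod_le_prod
    · exact fun r _ => mul_nonneg (hb r _) (ha r _)
    · intro r _
      rcases le_total (i r) (j r) with h | h
      · rw [min_eq_left h, max_eq_right h, mul_comm]
        exact hminor r _ _ h
      · rw [min_eq_right h, max_eq_left h, mul_comm]
  · rw [show min (1:Fin 2) 1 = 1 from rfl, show max (1:Fin 2) 1 = 1 from rfl,
      hQ2, hQ2, hQ2, hQ2, ← Finset.prod_mul_distrib, ← Finset.prod_mul_distrib]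
    apply le_of_eq
    apply Finset.prod_congr rfl
    intro r _
    rcases le_total (i r) (j r) with h | h
    · rw [min_eq_left h, max_eq_right h]
    · rw [min_eq_right h, max_eq_left h, mul_comm]
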